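/- For every integer g ≥ 0, the canonical genus-g graph C_g is a connected closed 3-colored graph with 2(2g+1) vertices and 3(2g+1) edges which has exactly one bicolored face for each of the three pairs of colors (i.e. each of the permutations σ₂⁻¹∘σ₁, σ₃⁻¹∘σ₁ and σ₃⁻¹∘σ₂ of its white vertex set is a single cycle of length 2g+1); consequently its Euler characteristic is χ(C_g) = 2(2g+1) − 3(2g+1) + 3 = 2 − 2g. -/

import Mathlib

/-!  Closed colored graphs (colored tensor model / matrix model Feynman graphs). -/

/-- A closed `D`-colored graph: a finite set `W` of white vertices, a finite set `B`
of black vertices, and for each color `c : Fin D` a bijection `σ c : W ≃ B`;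
the color-`c` edges are the pairs `(w, σ c w)`. -/
structure CGraph (D : ℕ) where
  W : Type
  B : Type
  finW : Finite W
  finB : Finite B
  σ : Fin D → W ≃ B

namespace CGraph

variable {D : ℕ}

/-- The permutation `σ_d⁻¹ ∘ σ_c` of the white vertices. Its orbits are the
(cd)-bicolored faces. -/
def biperm (G : CGraph D) (c d : Fin D) : Equiv.Perm G.W :=
  (G.σ c).trans (G.σ d).symm

/-- The "same cycle" setoid of a permutation. -/
def cycleSetoid {α : Type*} (π : Equiv.Perm α) : Setoid α where
  r := π.SameCycle
  iseqv := ⟨fun _ => ⟨0, by simp⟩, fun h => h.symm, fun h h' => h.trans h'⟩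

/-- The number of cycles (orbits) of a permutation. -/
noncomputable def numCycles {α : Type*} (π : Equiv.Perm α) : ℕ :=
  Nat.card (Quotient (cycleSetoid π))

/-- Total number of bicolored faces of a closed 3-colored graph
(over the three pairs of colors). -/
noncomputable def faces (G : CGraph 3) : ℕ :=
  numCycles (G.biperm 0 1) + numCycles (G.biperm 0 2) + numCycles (G.biperm 1 2)

/-- Euler characteristic of a closed 3-colored graph:
`χ(G) = #vertices − #edges + #faces = 2|W| − 3|W| + F(G)`. -/
noncomputable def euler (G : CGraph 3) : ℤ :=
  2 * (Nat.card G.W : ℤ) - 3 * (Nat.card G.W : ℤ) + (faces G : ℤ)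

/-- Connectedness: the subgroup generated by all the permutations `σ_d⁻¹ ∘ σ_c`
acts transitively on the white vertices. -/
def Connected (G : CGraph D) : Prop :=
  ∀ v w : G.W,
    ∃ π ∈ Subgroup.closure {π : Equiv.Perm G.W | ∃ c d : Fin D, π = G.biperm c d}, π v = w

/-- The number of white vertices in the (cd)-bicolored face through `v`
(the face itself has twice as many vertices). -/
noncomputable def faceSize (G : CGraph 3) (c d : Fin 3) (v : G.W) : ℕ :=
  Nat.card {w : G.W // (G.biperm c d).SameCycle v w}

/-- A closed 3-colored graph with colors `{0,1,2}` is a Feynman graph of the quartic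
complex matrix model iff every (12)-bicolored face has exactly 4 vertices, i.e. every
orbit of `σ₂⁻¹ ∘ σ₁` has exactly 2 elements. -/
def QuarticFeynman (G : CGraph 3) : Prop :=
  ∀ v : G.W, G.faceSize 1 2 v = 2

end CGraph

/-- The canonical genus-`g` graph `C_g`: the closed 3-colored graph (colors `1,2,3`,
here indexed by `Fin 3` as `0 ↦ color 1`, `1 ↦ color 2`, `2 ↦ color 3`) with white
vertices `w_i` and black vertices `b_i` indexed by `i ∈ ℤ/(2g+1)`, with color-1 edges
`w_i b_i`, color-2 edges `w_i b_{i-1}` and color-3 edges `w_i b_{i+g}`. -/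
def CGraph.canonical (g : ℕ) : CGraph 3 where
  W := ZMod (2 * g + 1)
  B := ZMod (2 * g + 1)
  finW := by infer_instance
  finB := by infer_instance
  σ := fun c =>
    if c = 0 then Equiv.refl _
    else if c = 1 then Equiv.subRight (1 : ZMod (2 * g + 1))
    else Equiv.addRight (g : ZMod (2 * g + 1))


lemma sameCycle_addRight {m : ℕ} [NeZero m] {a b : ZMod m} (h : a * b = 1)
    (v w : ZMod m) : (Equiv.addRight a).SameCycle v w := by
  refine ⟨((b * (w - v)).val : ℤ), ?_⟩
  rw [Equiv.zsmul_addRight]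
  show v + (((b * (w - v)).val : ℤ) • a) = w
  rw [zsmul_eq_mul, Int.cast_natCast, ZMod.natCast_val, ZMod.cast_id]
  linear_combination (w - v) * h

lemma canonical_biperm (g : ℕ) (c d : Fin 3) (hcd : c ≠ d) :
    ∃ a b : ZMod (2 * g + 1), a * b = 1 ∧
      (CGraph.canonical g).biperm c d = Equiv.addRight a := by
  have h0 : ((2 * g + 1 : ℕ) : ZMod (2 * g + 1)) = 0 := ZMod.natCast_self _
  push_cast at h0
  fin_cases c <;> fin_cases d
  · exact absurd rfl hcd
  · exact ⟨1, 1, by ring, by ext x; simp [CGraph.biperm, CGraph.canonical]; rfl⟩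
  · exact ⟨-(g : ZMod (2 * g + 1)), 2, by linear_combination -h0,
      by ext x; simp [CGraph.biperm, CGraph.canonical]⟩
  · exact ⟨-1, -1, by ring, by ext (x : ZMod (2 * g + 1)); simp [CGraph.biperm, CGraph.canonical]; show x - 1 = x + -1; ring⟩
  · exact absurd rfl hcd
  · exact ⟨-(1 + (g : ZMod (2 * g + 1))), -2, by linear_combination h0,
      by ext (x : ZMod (2 * g + 1)); simp [CGraph.biperm, CGraph.canonical]
         show x - 1 + -(g : ZMod (2 * g + 1)) = x + -(g : ZMod (2 * g + 1)) + -1; ring⟩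
  · exact ⟨(g : ZMod (2 * g + 1)), -2, by linear_combination -h0,
      by ext x; simp [CGraph.biperm, CGraph.canonical]⟩
  · exact ⟨1 + (g : ZMod (2 * g + 1)), 2, by linear_combination h0,
      by ext (x : ZMod (2 * g + 1)); simp [CGraph.biperm, CGraph.canonical]
         show x + (g : ZMod (2 * g + 1)) + 1 = x + 1 + (g : ZMod (2 * g + 1)); ring⟩
  · exact absurd rfl hcd

lemma canonical_sameCycle (g : ℕ) (c d : Fin 3) (hcd : c ≠ d)
    (v w : (CGraph.canonical g).W) :
    ((CGraph.canonical g).biperm c d).SameCycle v w := by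
  obtain ⟨a, b, hab, hbp⟩ := canonical_biperm g c d hcd
  rw [hbp]
  exact sameCycle_addRight hab v w

lemma numCycles_eq_one {α : Type*} [Nonempty α] (π : Equiv.Perm α)
    (h : ∀ v w : α, π.SameCycle v w) : CGraph.numCycles π = 1 := by
  unfold CGraph.numCycles
  rw [Nat.card_eq_one_iff_unique]
  refine ⟨⟨fun x y => Quotient.inductionOn₂ x y fun a b => Quotient.sound (h a b)⟩,
    ⟨Quotient.mk _ (Classical.arbitrary α)⟩⟩

/-- For every `g ≥ 0`, the canonical genus-`g` graph `C_g` is a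
connected closed 3-colored graph with `2(2g+1)` vertices (`2g+1` white and `2g+1` black,
hence `3(2g+1)` edges) having exactly one bicolored face for each of the three pairs of
colors: each permutation `σ_d⁻¹ ∘ σ_c` (`c ≠ d`) is a single cycle (of length `2g+1`).
Consequently `χ(C_g) = 2(2g+1) − 3(2g+1) + 3 = 2 − 2g`. -/
theorem canonical_graph_props (g : ℕ) :
    (CGraph.canonical g).Connected ∧
    Nat.card (CGraph.canonical g).W = 2 * g + 1 ∧
    Nat.card (CGraph.canonical g).B = 2 * g + 1 ∧
    3 * Nat.card (CGraph.canonical g).W = 3 * (2 * g + 1) ∧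
    (∀ c d : Fin 3, c ≠ d →
      ∀ v w : (CGraph.canonical g).W, ((CGraph.canonical g).biperm c d).SameCycle v w) ∧
    (CGraph.canonical g).faces = 3 ∧
    (CGraph.canonical g).euler = 2 - 2 * (g : ℤ) := by

  have hne : Nonempty (CGraph.canonical g).W := by
    exact (inferInstance : Nonempty (ZMod (2 * g + 1)))
  have hsc : ∀ c d : Fin 3, c ≠ d →
      ∀ v w : (CGraph.canonical g).W, ((CGraph.canonical g).biperm c d).SameCycle v w :=
    fun c d hcd => canonical_sameCycle g c d hcd
  have hW : Nat.card (CGraph.canonical g).W = 2 * g + 1 := by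
    show Nat.card (ZMod (2 * g + 1)) = 2 * g + 1; exact Nat.card_zmod _
  have hB : Nat.card (CGraph.canonical g).B = 2 * g + 1 := by
    show Nat.card (ZMod (2 * g + 1)) = 2 * g + 1; exact Nat.card_zmod _
  have hfaces : (CGraph.canonical g).faces = 3 := by
    unfold CGraph.faces
    rw [numCycles_eq_one _ (hsc 0 1 (by decide)),
        numCycles_eq_one _ (hsc 0 2 (by decide)),
        numCycles_eq_one _ (hsc 1 2 (by decide))]
  refine ⟨?_, hW, hB, by rw [hW], hsc, hfaces, ?_⟩
  · intro v w
    obtain ⟨n, hn⟩ := hsc 0 1 (by decide) v w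
    exact ⟨((CGraph.canonical g).biperm 0 1) ^ n,
      Subgroup.zpow_mem _ (Subgroup.subset_closure (Set.mem_setOf.mpr ⟨0, 1, rfl⟩)) n, hn⟩
  · unfold CGraph.euler
    rw [hfaces, hW]
    push_cast
    ring
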